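/- The sum of groves of planar binary trees is associative, (A + B) + C = A + (B + C) for all groves A, B, C; the grove {|} is a two-sided neutral element; and if A is a grove of degree n and B is a grove of degree m, then A + B is a grove of degree n + m (in particular A + B is a nonempty subset of Y_{n+m}). Hence the set of all groves is a graded monoid under + and the degree map to ℕ is a monoid morphism. -/

import Mathlib

/-- A planar binary tree: a leaf `|` or a grafting `x ∨ y`. -/
inductive PBT : Type
  | leaf : PBT
  | node : PBT → PBT → PBT
  deriving DecidableEq

namespace PBT

/-- The degree: number of internal vertices. -/
def deg : PBT → ℕ
  | leaf => 0
  | node l r => deg l + deg r + 1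

/-- The set `Y n` of planar binary trees of degree `n`. -/
def Y (n : ℕ) : Set PBT := {t | t.deg = n}

/-- The `over` operation `x / y`. -/
def overT : PBT → PBT → PBT
  | x, leaf => x
  | x, node yl yr => node (overT x yl) yr

/-- The `under` operation `x \ y`. -/
def under : PBT → PBT → PBT
  | leaf, y => y
  | node xl xr, y => node xl (under xr y)

/-- The Tamari order, generated by `(x ∨ y) ∨ z ≤ x ∨ (y ∨ z)` and compatibility
with grafting on both sides. -/
inductive tle : PBT → PBT → Prop
  | refl (x : PBT) : tle x x
  | trans {x y z : PBT} : tle x y → tle y z → tle x z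
  | rotate (x y z : PBT) : tle (node (node x y) z) (node x (node y z))
  | node_left {x y : PBT} (z : PBT) : tle x y → tle (node x z) (node y z)
  | node_right {x y : PBT} (z : PBT) : tle x y → tle (node z x) (node z y)

/-- The sum of two planar binary trees: the Tamari interval `[x/y, x\y]`
(a subset of `Y (deg x + deg y)`). -/
def sum (x y : PBT) : Set PBT := {z | tle (overT x y) z ∧ tle z (under x y)}

/-- A grove of degree `n`: a nonempty subset of `Y n`. -/
def Grove (n : ℕ) (A : Set PBT) : Prop := A.Nonempty ∧ ∀ x ∈ A, x.deg = n

/-- The sum of groves. -/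
def gsum (A B : Set PBT) : Set PBT := ⋃ x ∈ A, ⋃ y ∈ B, sum x y

/-- The reflection involution σ. -/
def σ : PBT → PBT
  | leaf => leaf
  | node l r => node (σ r) (σ l)

/-- The left sum `x ⊣ y` of trees (with the conventions `x ⊣ | = {x}`, `| ⊣ y = {|}`). -/
def lsum : PBT → PBT → Set PBT
  | x, leaf => {x}
  | leaf, _ => {leaf}
  | node xl xr, y => (fun z => node xl z) '' sum xr y

/-- The right sum `x ⊢ y` of trees (with the conventions `| ⊢ y = {y}`, `x ⊢ | = {|}`). -/
def rsum : PBT → PBT → Set PBT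
  | leaf, y => {y}
  | _, leaf => {leaf}
  | x, node yl yr => (fun z => node z yr) '' sum x yl

/-- Left sum of groves. -/
def glsum (A B : Set PBT) : Set PBT := ⋃ x ∈ A, ⋃ y ∈ B, lsum x y

/-- Right sum of groves. -/
def grsum (A B : Set PBT) : Set PBT := ⋃ x ∈ A, ⋃ y ∈ B, rsum x y

/-- Multiplication of a tree by a grove:
`| × B = {|}` and `(xˡ ∨ xʳ) × B = ((xˡ × B) ⊢ B) ⊣ (xʳ × B)`.
(The conventions `{|} ⊢ B = B` and `A ⊣ {|} = A` are built into `rsum`/`lsum`.) -/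
def tmul : PBT → Set PBT → Set PBT
  | leaf, _ => {leaf}
  | node l r, B => glsum (grsum (tmul l B) B) (tmul r B)

/-- Multiplication of groves. -/
def gmul (A B : Set PBT) : Set PBT := ⋃ x ∈ A, tmul x B

end PBT

namespace PBT

lemma over_leaf : ∀ y, overT leaf y = y
  | leaf => rfl
  | node a b => by simp [overT, over_leaf a]

lemma under_leaf : ∀ x, under x leaf = x
  | leaf => rfl
  | node a b => by simp [under, under_leaf b]

lemma deg_over : ∀ x y, (overT x y).deg = x.deg + y.deg
  | x, leaf => by simp [overT, deg]
  | x, node a b => by simp [overT, deg, deg_over x a]; omega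

lemma deg_under : ∀ x y, (under x y).deg = x.deg + y.deg
  | leaf, y => by simp [under, deg]
  | node a b, y => by simp [under, deg, deg_under b y]; omega

lemma tle_deg {a b : PBT} (h : tle a b) : a.deg = b.deg := by
  induction h with
  | refl => rfl
  | trans _ _ ih1 ih2 => omega
  | rotate x y z => simp [deg]; omega
  | node_left z _ ih => simp [deg]; omega
  | node_right z _ ih => simp [deg]; omega

/-- single rotation somewhere -/
inductive stp : PBT → PBT → Prop
  | root (a b c : PBT) : stp (node (node a b) c) (node a (node b c))
  | left {a b : PBT} (c : PBT) : stp a b → stp (node a c) (node b c)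
  | right {a b : PBT} (c : PBT) : stp a b → stp (node c a) (node c b)

lemma stp_tle {a b : PBT} (h : stp a b) : tle a b := by
  induction h with
  | root a b c => exact tle.rotate a b c
  | left c _ ih => exact tle.node_left c ih
  | right c _ ih => exact tle.node_right c ih

lemma stp_deg {a b : PBT} (h : stp a b) : a.deg = b.deg := tle_deg (stp_tle h)

lemma tle_of_rtg {a b : PBT} (h : Relation.ReflTransGen stp a b) : tle a b := by
  induction h with
  | refl => exact tle.refl a
  | tail _ hs ih => exact tle.trans ih (stp_tle hs)

lemma rtg_of_tle {a b : PBT} (h : tle a b) : Relation.ReflTransGen stp a b := by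
  induction h with
  | refl x => exact Relation.ReflTransGen.refl
  | trans _ _ ih1 ih2 => exact ih1.trans ih2
  | rotate x y z => exact Relation.ReflTransGen.single (stp.root x y z)
  | node_left z _ ih => exact Relation.ReflTransGen.lift (fun t => node t z) (fun _ _ h => stp.left z h) _ _ ih
  | node_right z _ ih => exact Relation.ReflTransGen.lift (fun t => node z t) (fun _ _ h => stp.right z h) _ _ ih

def mu : PBT → ℕ
  | leaf => 0
  | node l r => mu l + mu r + deg l

lemma stp_mu {a b : PBT} (h : stp a b) : mu b < mu a := by
  induction h with
  | root a b c => simp [mu, deg]; omega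
  | left c hs ih => have := stp_deg hs; simp [mu]; omega
  | right c hs ih => simp [mu]; omega

lemma rtg_mu {a b : PBT} (h : Relation.ReflTransGen stp a b) : mu b ≤ mu a := by
  induction h with
  | refl => exact le_refl _
  | tail _ hs ih => exact le_trans (le_of_lt (stp_mu hs)) ih

lemma tle_mu {a b : PBT} (h : tle a b) : mu b ≤ mu a := rtg_mu (rtg_of_tle h)

lemma tle_antisymm {a b : PBT} (h1 : tle a b) (h2 : tle b a) : a = b := by
  rcases (Relation.ReflTransGen.cases_head (rtg_of_tle h1)) with h | ⟨c, hac, hcb⟩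
  · exact h
  · exfalso
    have := stp_mu hac
    have := tle_mu (tle_of_rtg hcb)
    have := tle_mu h2
    omega

/-- relation describing `tle` between nodes -/
def Rr (a b c d : PBT) : Prop :=
  (tle a c ∧ tle b d) ∨ ∃ e, tle a (node c e) ∧ tle (node e b) d

lemma Rr_tle {a b c d : PBT} (h : Rr a b c d) : tle (node a b) (node c d) := by
  rcases h with ⟨h1, h2⟩ | ⟨e, h1, h2⟩
  · exact tle.trans (tle.node_left b h1) (tle.node_right c h2)
  · exact tle.trans (tle.node_left b h1)
      (tle.trans (tle.rotate c e b) (tle.node_right c h2))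

lemma Rr_comp {a b c d c' d' : PBT} (h1 : Rr a b c d) (h2 : Rr c d c' d') : Rr a b c' d' := by
  rcases h1 with ⟨p1, p2⟩ | ⟨e, p1, p2⟩
  · rcases h2 with ⟨q1, q2⟩ | ⟨f, q1, q2⟩
    · exact Or.inl ⟨tle.trans p1 q1, tle.trans p2 q2⟩
    · exact Or.inr ⟨f, tle.trans p1 q1, tle.trans (tle.node_right f p2) q2⟩
  · rcases h2 with ⟨q1, q2⟩ | ⟨f, q1, q2⟩
    · exact Or.inr ⟨e, tle.trans p1 (tle.node_left e q1), tle.trans p2 q2⟩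
    · refine Or.inr ⟨node f e, ?_, ?_⟩
      · exact tle.trans p1 (tle.trans (tle.node_left e q1) (tle.rotate c' f e))
      · exact tle.trans (tle.rotate f e b) (tle.trans (tle.node_right f p2) q2)

lemma tle_structure {u v : PBT} (h : tle u v) :
    (u = leaf ∧ v = leaf) ∨ ∃ a b c d, u = node a b ∧ v = node c d ∧ Rr a b c d := by
  induction h with
  | refl x =>
    cases x with
    | leaf => exact Or.inl ⟨rfl, rfl⟩
    | node a b => exact Or.inr ⟨a, b, a, b, rfl, rfl, Or.inl ⟨tle.refl a, tle.refl b⟩⟩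
  | trans _ _ ih1 ih2 =>
    rcases ih1 with ⟨h1, h2⟩ | ⟨a, b, c, d, h1, h2, hR⟩
    · subst h1; subst h2
      rcases ih2 with ⟨h3, h4⟩ | ⟨a, b, c, d, h3, h4, hR⟩
      · subst h4; exact Or.inl ⟨rfl, rfl⟩
      · exact absurd h3 (by simp)
    · subst h1; subst h2
      rcases ih2 with ⟨h3, _⟩ | ⟨c', d', c'', d'', h3, h4, hR'⟩
      · exact absurd h3 (by simp)
      · subst h4
        injection h3 with e1 e2
        subst e1; subst e2
        exact Or.inr ⟨a, b, c'', d'', rfl, rfl, Rr_comp hR hR'⟩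
  | rotate x y z =>
    exact Or.inr ⟨node x y, z, x, node y z, rfl, rfl,
      Or.inr ⟨y, tle.refl _, tle.refl _⟩⟩
  | @node_left x y z h ih => exact Or.inr ⟨x, z, y, z, rfl, rfl, Or.inl ⟨h, tle.refl z⟩⟩
  | @node_right x y z h ih => exact Or.inr ⟨z, x, z, y, rfl, rfl, Or.inl ⟨tle.refl z, h⟩⟩

lemma tle_node_node {a b c d : PBT} (h : tle (node a b) (node c d)) : Rr a b c d := by
  rcases tle_structure h with ⟨h1, _⟩ | ⟨a', b', c', d', h1, h2, hR⟩
  · exact absurd h1 (by simp)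
  · injection h1 with e1 e2; injection h2 with e3 e4
    subst e1; subst e2; subst e3; subst e4; exact hR


lemma over_le (a b : PBT) : ∀ c, tle (overT (node a b) c) (node a (overT b c))
  | leaf => tle.refl _
  | node cl cr =>
    tle.trans (tle.node_left cr (over_le a b cl)) (tle.rotate a (overT b cl) cr)

lemma under_ge (a : PBT) : ∀ b c, tle (node (under a b) c) (under a (node b c)) := by
  induction a with
  | leaf => intro b c; exact tle.refl _
  | node a1 a2 ih1 ih2 =>
    intro b c
    exact tle.trans (tle.rotate a1 (under a2 b) c) (tle.node_right a1 (ih2 b c))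

lemma over_le_under : ∀ x y, tle (overT x y) (under x y) := by
  intro x
  induction x with
  | leaf => intro y; rw [over_leaf]; exact tle.refl _
  | node xl xr ih1 ih2 =>
    intro y
    exact tle.trans (over_le xl xr y) (tle.node_right xl (ih2 y))

lemma mem_sum_self (x y : PBT) : overT x y ∈ sum x y :=
  ⟨tle.refl _, over_le_under x y⟩

lemma deg_of_mem_sum {x y z : PBT} (h : z ∈ sum x y) : z.deg = x.deg + y.deg := by
  have := tle_deg h.1
  rw [deg_over] at this
  omega

lemma sum_leaf_right (x : PBT) : sum x leaf = {x} := by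
  ext z
  simp only [sum, Set.mem_setOf_eq, Set.mem_singleton_iff]
  constructor
  · rintro ⟨h1, h2⟩
    rw [show overT x leaf = x from rfl] at h1
    rw [under_leaf] at h2
    exact (tle_antisymm h2 h1).symm ▸ (tle_antisymm h1 h2).symm
  · rintro rfl
    exact ⟨tle.refl _, by rw [under_leaf]; exact tle.refl _⟩

lemma sum_leaf_left (y : PBT) : sum leaf y = {y} := by
  ext z
  simp only [sum, Set.mem_setOf_eq, Set.mem_singleton_iff]
  rw [over_leaf, show under leaf y = y from rfl]
  constructor
  · rintro ⟨h1, h2⟩; exact (tle_antisymm h1 h2).symm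
  · rintro rfl; exact ⟨tle.refl _, tle.refl _⟩

/-- Key structural lemma about trees below `g \ (yl ∨ yr)`. -/
lemma KL (yl yr : PBT) : ∀ (g : PBT) (f c : PBT),
    tle (node f c) (under g (node yl yr)) → c.deg < yl.deg + yr.deg + 1 →
    (tle c yr ∧ tle f (under g yl)) ∨ ∃ e, tle (node e c) yr ∧ tle f (under g (node yl e)) := by
  intro g
  induction g with
  | leaf =>
    intro f c h hd
    rcases tle_node_node h with ⟨h1, h2⟩ | ⟨e, h1, h2⟩
    · exact Or.inl ⟨h2, h1⟩
    · exact Or.inr ⟨e, h2, h1⟩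
  | node gl gr ih1 ih2 =>
    intro f c h hd
    rcases tle_node_node h with ⟨h1, h2⟩ | ⟨e1, h1, h2⟩
    · exfalso
      have := tle_deg h2
      rw [deg_under] at this
      simp [deg] at this
      omega
    · rcases ih2 e1 c h2 hd with ⟨hc, he⟩ | ⟨e, hce, he1⟩
      · exact Or.inl ⟨hc, tle.trans h1 (tle.node_right gl he)⟩
      · exact Or.inr ⟨e, hce, tle.trans h1 (tle.node_right gl he1)⟩


def Ls : PBT → PBT → Set PBT
  | x, leaf => {x}
  | leaf, _ => ∅
  | node xl xr, y => (fun v => node xl v) '' sum xr y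

def Rs : PBT → PBT → Set PBT
  | leaf, y => {y}
  | _, leaf => ∅
  | x, node yl yr => (fun u => node u yr) '' sum x yl

lemma Ls_leaf (x : PBT) : Ls x leaf = {x} := by cases x <;> rfl
lemma Ls_leaf_node (a b : PBT) : Ls leaf (node a b) = ∅ := rfl
lemma Ls_node (xl xr yl yr : PBT) :
    Ls (node xl xr) (node yl yr) = (fun v => node xl v) '' sum xr (node yl yr) := rfl
lemma Rs_leaf (y : PBT) : Rs leaf y = {y} := by cases y <;> rfl
lemma Rs_node_leaf (a b : PBT) : Rs (node a b) leaf = ∅ := rfl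
lemma Rs_node (x yl yr : PBT) (hx : x ≠ leaf) :
    Rs x (node yl yr) = (fun u => node u yr) '' sum x yl := by
  cases x with
  | leaf => exact absurd rfl hx
  | node a b => rfl

lemma LsRs_subset (x y : PBT) : Ls x y ∪ Rs x y ⊆ sum x y := by
  cases x with
  | leaf =>
    cases y with
    | leaf => rw [Ls_leaf, Rs_leaf, sum_leaf_right]; simp
    | node yl yr => rw [Ls_leaf_node, Rs_leaf, sum_leaf_left]; simp
  | node xl xr =>
    cases y with
    | leaf => rw [Ls_leaf, Rs_node_leaf, sum_leaf_right]; simp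
    | node yl yr =>
      rw [Ls_node, Rs_node _ _ _ (by simp)]
      rintro z (⟨v, hv, rfl⟩ | ⟨u, hu, rfl⟩)
      · constructor
        · exact tle.trans (over_le xl xr (node yl yr)) (tle.node_right xl hv.1)
        · exact tle.node_right xl hv.2
      · constructor
        · exact tle.node_left yr hu.1
        · exact tle.trans (tle.node_left yr hu.2) (under_ge (node xl xr) yl yr)

lemma rtg_closed {S : Set PBT} {ub : PBT}
    (hS : ∀ z z', z ∈ S → stp z z' → tle z' ub → z' ∈ S)
    {a w : PBT} (h : Relation.ReflTransGen stp a w) (hw : tle w ub) (ha : a ∈ S) :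
    w ∈ S := by
  revert ha
  induction h using Relation.ReflTransGen.head_induction_on with
  | refl => exact fun h => h
  | head h' hrest ih =>
    exact fun ha => ih (hS _ _ ha h' (tle.trans (tle_of_rtg hrest) hw))

lemma sum_eq_aux : ∀ n : ℕ, ∀ x y : PBT, x.deg + y.deg < n →
    sum x y = Ls x y ∪ Rs x y := by
  intro n
  induction n with
  | zero => intro x y h; omega
  | succ n IH =>
    intro x y hlt
    cases x with
    | leaf =>
      cases y with
      | leaf => rw [Ls_leaf, Rs_leaf, sum_leaf_right]; simp
      | node yl yr => rw [Ls_leaf_node, Rs_leaf, sum_leaf_left]; simp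
    | node xl xr =>
      cases y with
      | leaf => rw [Ls_leaf, Rs_node_leaf, sum_leaf_right]; simp
      | node yl yr =>
        refine Set.Subset.antisymm ?_ (LsRs_subset _ _)
        -- closure of Ls ∪ Rs under single upward steps below the upper bound
        have clos : ∀ z z', z ∈ Ls (node xl xr) (node yl yr) ∪ Rs (node xl xr) (node yl yr) →
            stp z z' → tle z' (under (node xl xr) (node yl yr)) →
            z' ∈ Ls (node xl xr) (node yl yr) ∪ Rs (node xl xr) (node yl yr) := by
          intro z z' hz hst hub
          rw [Ls_node, Rs_node _ _ _ (by simp)] at hz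
          rw [show under (node xl xr) (node yl yr) = node xl (under xr (node yl yr)) from rfl] at hub
          rcases hz with ⟨v, hv, rfl⟩ | ⟨u, hu, rfl⟩
          · -- z = node xl v with v ∈ sum xr (yl ∨ yr)
            cases hst with
            | root a b =>
              -- here xl = node a b; impossible by degree analysis
              exfalso
              rcases tle_node_node hub with ⟨h1, _⟩ | ⟨f, h1, _⟩
              · have := tle_deg h1; simp [deg] at this; omega
              · have := tle_deg h1; simp [deg] at this; omega
            | left _ hst' =>
              -- step inside xl; impossible
              exfalso
              rename_i b
              rcases tle_node_node hub with ⟨h1, _⟩ | ⟨f, h1, _⟩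
              · have hb := tle_antisymm (stp_tle hst') h1
                subst hb
                exact absurd (stp_mu hst') (by omega)
              · have e1 := tle_deg h1
                have e2 := stp_deg hst'
                simp [deg] at e1
                omega
            | right _ hst' =>
              rename_i b
              rcases tle_node_node hub with ⟨_, h2⟩ | ⟨f, h1, _⟩
              · left
                rw [Ls_node]
                exact ⟨b, ⟨tle.trans hv.1 (stp_tle hst'), h2⟩, rfl⟩
              · exfalso
                have := tle_deg h1; simp [deg] at this; omega
          · -- z = node u yr with u ∈ sum (node xl xr) yl
            have hud : u.deg = (node xl xr).deg + yl.deg := deg_of_mem_sum hu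
            cases hst with
            | root a b =>
              -- u = node a b, z' = node a (node b yr)
              have hxy : sum (node xl xr) yl =
                  Ls (node xl xr) yl ∪ Rs (node xl xr) yl := by
                apply IH
                simp [deg] at hlt ⊢
                omega
              rw [hxy] at hu
              rcases hu with hu | hu
              · cases yl with
                | leaf =>
                  rw [Ls_leaf] at hu
                  simp only [Set.mem_singleton_iff] at hu
                  injection hu.symm with e1 e2
                  subst e1; subst e2
                  left
                  rw [Ls_node]
                  refine ⟨node xr yr, ?_, rfl⟩
                  rw [show node xr yr = overT xr (node leaf yr) from rfl]
                  exact mem_sum_self _ _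
                | node yll ylr =>
                  rw [Ls_node] at hu
                  obtain ⟨v, hv, huv⟩ := hu
                  injection huv with e1 e2
                  subst e1; subst e2
                  left
                  rw [Ls_node]
                  refine ⟨node v yr, ⟨?_, ?_⟩, rfl⟩
                  · exact tle.node_left yr hv.1
                  · exact tle.trans (tle.node_left yr hv.2) (under_ge xr (node yll ylr) yr)
              · cases yl with
                | leaf => rw [Rs_node_leaf] at hu; exact absurd hu (Set.notMem_empty _)
                | node yll ylr =>
                  rw [Rs_node _ _ _ (by simp)] at hu
                  obtain ⟨u', hu', huv⟩ := hu
                  injection huv with e1 e2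
                  subst e1; subst e2
                  exfalso
                  rcases tle_node_node hub with ⟨h1, _⟩ | ⟨f, h1, h2⟩
                  · have e1 := tle_deg h1
                    have e2 := deg_of_mem_sum hu'
                    simp [deg] at e1 e2
                    omega
                  · rcases KL (node yll ylr) yr xr f (node ylr yr) h2
                        (by simp [deg]) with ⟨hc, _⟩ | ⟨e, hc, _⟩
                    · have := tle_deg hc; simp [deg] at this; omega
                    · have := tle_deg hc; simp [deg] at this; omega
            | left _ hst' =>
              rename_i b
              rcases tle_node_node hub with ⟨h1, _⟩ | ⟨f, h1, h2⟩
              · exfalso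
                have e1 := tle_deg h1
                have e2 := stp_deg hst'
                simp [deg] at hud
                omega
              · rcases KL yl yr xr f yr h2 (by omega) with ⟨_, hf⟩ | ⟨e, hc, _⟩
                · right
                  rw [Rs_node _ _ _ (by simp)]
                  refine ⟨b, ⟨tle.trans hu.1 (stp_tle hst'), ?_⟩, rfl⟩
                  exact tle.trans h1 (tle.node_right xl hf)
                · exfalso
                  have := tle_deg hc; simp [deg] at this; omega
            | right _ hst' =>
              rename_i b
              rcases tle_node_node hub with ⟨h1, _⟩ | ⟨f, h1, h2⟩
              · exfalso
                have e1 := tle_deg h1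
                simp [deg] at hud
                omega
              · have hdb : yr.deg = b.deg := stp_deg hst'
                rcases KL yl yr xr f b h2 (by omega) with ⟨hc, _⟩ | ⟨e, hc, _⟩
                · exfalso
                  have hb := tle_antisymm (stp_tle hst') hc
                  subst hb
                  exact absurd (stp_mu hst') (by omega)
                · exfalso
                  have := tle_deg hc; simp [deg] at this; omega
        intro w hw
        refine rtg_closed clos (rtg_of_tle hw.1) hw.2 ?_
        right
        rw [Rs_node _ _ _ (by simp)]
        exact ⟨overT (node xl xr) yl, mem_sum_self _ _, rfl⟩

lemma sum_eq (x y : PBT) : sum x y = Ls x y ∪ Rs x y :=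
  sum_eq_aux (x.deg + y.deg + 1) x y (by omega)

lemma mem_sum_node {xl xr yl yr w : PBT} :
    w ∈ sum (node xl xr) (node yl yr) ↔
      (∃ v, v ∈ sum xr (node yl yr) ∧ w = node xl v) ∨
      (∃ u, u ∈ sum (node xl xr) yl ∧ w = node u yr) := by
  rw [sum_eq, Ls_node, Rs_node _ _ _ (by simp)]
  simp only [Set.mem_union, Set.mem_image]
  constructor
  · rintro (⟨v, hv, rfl⟩ | ⟨u, hu, rfl⟩)
    · exact Or.inl ⟨v, hv, rfl⟩
    · exact Or.inr ⟨u, hu, rfl⟩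
  · rintro (⟨v, hv, rfl⟩ | ⟨u, hu, rfl⟩)
    · exact Or.inl ⟨v, hv, rfl⟩
    · exact Or.inr ⟨u, hu, rfl⟩


lemma node_of_mem_sum_nodeL {a b y z : PBT} (h : z ∈ sum (node a b) y) :
    ∃ p q, z = node p q := by
  cases z with
  | leaf => have := deg_of_mem_sum h; simp [deg] at this; omega
  | node p q => exact ⟨p, q, rfl⟩

lemma node_of_mem_sum_nodeR {a b x z : PBT} (h : z ∈ sum x (node a b)) :
    ∃ p q, z = node p q := by
  cases z with
  | leaf => have := deg_of_mem_sum h; simp [deg] at this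
  | node p q => exact ⟨p, q, rfl⟩

lemma sum_assoc_aux : ∀ n : ℕ, ∀ x y c : PBT, x.deg + y.deg + c.deg < n →
    (⋃ z ∈ sum x y, sum z c) = ⋃ w ∈ sum y c, sum x w := by
  intro n
  induction n with
  | zero => intro x y c h; omega
  | succ n IH =>
    intro x y c hlt
    cases y with
    | leaf =>
      rw [sum_leaf_right, sum_leaf_left]
      simp
    | node yl yr =>
      cases c with
      | leaf =>
        rw [sum_leaf_right]
        simp [sum_leaf_right]
      | node cl cr =>
        cases x with
        | leaf =>
          rw [sum_leaf_left]
          simp [sum_leaf_left]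
        | node xl xr =>
          -- the generic case
          have IH1 : ∀ w2 : PBT, (∃ v, v ∈ sum xr (node yl yr) ∧ w2 ∈ sum v (node cl cr)) ↔
              (∃ t, t ∈ sum (node yl yr) (node cl cr) ∧ w2 ∈ sum xr t) := by
            have h := IH xr (node yl yr) (node cl cr) (by simp [deg] at hlt ⊢; omega)
            rw [Set.ext_iff] at h
            intro w2
            have := h w2
            simpa [Set.mem_iUnion] using this
          have IH2 : ∀ w1 : PBT, (∃ z, z ∈ sum (node xl xr) (node yl yr) ∧ w1 ∈ sum z cl) ↔
              (∃ s, s ∈ sum (node yl yr) cl ∧ w1 ∈ sum (node xl xr) s) := by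
            have h := IH (node xl xr) (node yl yr) cl (by simp [deg] at hlt ⊢; omega)
            rw [Set.ext_iff] at h
            intro w1
            have := h w1
            simpa [Set.mem_iUnion] using this
          ext w
          simp only [Set.mem_iUnion, exists_prop]
          constructor
          · rintro ⟨z, hz, hw⟩
            rcases mem_sum_node.mp hz with ⟨v, hv, rfl⟩ | ⟨u, hu, rfl⟩
            · rcases mem_sum_node.mp hw with ⟨w2, hw2, rfl⟩ | ⟨w1, hw1, rfl⟩
              · obtain ⟨t, ht, hw2'⟩ := (IH1 w2).mp ⟨v, hv, hw2⟩
                obtain ⟨t1, t2, rfl⟩ := node_of_mem_sum_nodeL ht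
                exact ⟨node t1 t2, ht, mem_sum_node.mpr (Or.inl ⟨w2, hw2', rfl⟩)⟩
              · obtain ⟨s, hs, hw1'⟩ := (IH2 w1).mp
                  ⟨node xl v, mem_sum_node.mpr (Or.inl ⟨v, hv, rfl⟩), hw1⟩
                exact ⟨node s cr, mem_sum_node.mpr (Or.inr ⟨s, hs, rfl⟩),
                  mem_sum_node.mpr (Or.inr ⟨w1, hw1', rfl⟩)⟩
            · rcases mem_sum_node.mp hw with ⟨w2, hw2, rfl⟩ | ⟨w1, hw1, rfl⟩
              · refine ⟨node yl w2, mem_sum_node.mpr (Or.inl ⟨w2, hw2, rfl⟩),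
                  mem_sum_node.mpr (Or.inr ⟨u, hu, rfl⟩)⟩
              · obtain ⟨s, hs, hw1'⟩ := (IH2 w1).mp
                  ⟨node u yr, mem_sum_node.mpr (Or.inr ⟨u, hu, rfl⟩), hw1⟩
                exact ⟨node s cr, mem_sum_node.mpr (Or.inr ⟨s, hs, rfl⟩),
                  mem_sum_node.mpr (Or.inr ⟨w1, hw1', rfl⟩)⟩
          · rintro ⟨t, ht, hw⟩
            rcases mem_sum_node.mp ht with ⟨t2, ht2, rfl⟩ | ⟨s, hs, rfl⟩
            · rcases mem_sum_node.mp hw with ⟨w2, hw2, rfl⟩ | ⟨u, hu, rfl⟩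
              · obtain ⟨v, hv, hw2'⟩ := (IH1 w2).mpr
                  ⟨node yl t2, mem_sum_node.mpr (Or.inl ⟨t2, ht2, rfl⟩), hw2⟩
                exact ⟨node xl v, mem_sum_node.mpr (Or.inl ⟨v, hv, rfl⟩),
                  mem_sum_node.mpr (Or.inl ⟨w2, hw2', rfl⟩)⟩
              · exact ⟨node u yr, mem_sum_node.mpr (Or.inr ⟨u, hu, rfl⟩),
                  mem_sum_node.mpr (Or.inl ⟨t2, ht2, rfl⟩)⟩
            · rcases mem_sum_node.mp hw with ⟨w2, hw2, rfl⟩ | ⟨w1, hw1, rfl⟩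
              · obtain ⟨v, hv, hw2'⟩ := (IH1 w2).mpr
                  ⟨node s cr, mem_sum_node.mpr (Or.inr ⟨s, hs, rfl⟩), hw2⟩
                exact ⟨node xl v, mem_sum_node.mpr (Or.inl ⟨v, hv, rfl⟩),
                  mem_sum_node.mpr (Or.inl ⟨w2, hw2', rfl⟩)⟩
              · obtain ⟨z, hz, hw1'⟩ := (IH2 w1).mpr ⟨s, hs, hw1⟩
                obtain ⟨z1, z2, rfl⟩ := node_of_mem_sum_nodeL hz
                exact ⟨node z1 z2, hz, mem_sum_node.mpr (Or.inr ⟨w1, hw1', rfl⟩)⟩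

lemma sum_assoc (x y c : PBT) :
    (⋃ z ∈ sum x y, sum z c) = ⋃ w ∈ sum y c, sum x w :=
  sum_assoc_aux (x.deg + y.deg + c.deg + 1) x y c (by omega)

end PBT

open PBT in
/-- the sum of groves is associative, `{|}` is a two-sided neutral
element, and the sum of a grove of degree `n` and a grove of degree `m` is a
grove of degree `n + m` (so groves form a graded monoid and `deg` is a monoid
morphism to `ℕ`). -/
theorem grove_sum_monoid :
    (∀ A B C : Set PBT, gsum (gsum A B) C = gsum A (gsum B C)) ∧
    (∀ n : ℕ, ∀ A : Set PBT, Grove n A → gsum {PBT.leaf} A = A ∧ gsum A {PBT.leaf} = A) ∧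
    (∀ n m : ℕ, ∀ A B : Set PBT, Grove n A → Grove m B → Grove (n + m) (gsum A B)) := by
  refine ⟨?_, ?_, ?_⟩
  · intro A B C
    ext w
    simp only [gsum, Set.mem_iUnion, exists_prop]
    have key : ∀ x y c : PBT, (∃ z, z ∈ sum x y ∧ w ∈ sum z c) ↔
        (∃ t, t ∈ sum y c ∧ w ∈ sum x t) := by
      intro x y c
      have h := sum_assoc x y c
      rw [Set.ext_iff] at h
      have := h w
      simpa [Set.mem_iUnion] using this
    constructor
    · rintro ⟨z, ⟨x, hx, y, hy, hz⟩, c, hc, hw⟩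
      obtain ⟨t, ht, hw'⟩ := (key x y c).mp ⟨z, hz, hw⟩
      exact ⟨x, hx, t, ⟨y, hy, c, hc, ht⟩, hw'⟩
    · rintro ⟨x, hx, t, ⟨y, hy, c, hc, ht⟩, hw⟩
      obtain ⟨z, hz, hw'⟩ := (key x y c).mpr ⟨t, ht, hw⟩
      exact ⟨z, ⟨x, hx, y, hy, hz⟩, c, hc, hw'⟩
  · intro n A _
    constructor
    · ext w
      simp [gsum, sum_leaf_left]
    · ext w
      simp [gsum, sum_leaf_right]
  · rintro n m A B ⟨⟨x, hx⟩, hA⟩ ⟨⟨y, hy⟩, hB⟩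
    constructor
    · refine ⟨overT x y, ?_⟩
      simp only [gsum, Set.mem_iUnion, exists_prop]
      exact ⟨x, hx, y, hy, mem_sum_self x y⟩
    · intro z hz
      simp only [gsum, Set.mem_iUnion, exists_prop] at hz
      obtain ⟨a, ha, b, hb, hzz⟩ := hz
      rw [deg_of_mem_sum hzz, hA a ha, hB b hb]
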